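/- arXiv:2012.12145 — 2 statements merged into one kernel-verified Lean document; each statement's English description precedes it below -/
import Mathlib

section
/- Assume v ≠ v_o and d_CPA ≤ d_crit for some real d_crit ≥ 0. Then t₁ = t_CPA − √(d_crit² − d_CPA²)/‖v − v_o‖ and t₂ = t_CPA + √(d_crit² − d_CPA²)/‖v − v_o‖ both solve the critical-distance equation ‖(p + t·v) − (p_o + t·v_o)‖ = d_crit, and every real solution t of this equation equals t₁ or t₂. -/
open RealInnerProductSpace

/-- If `v ≠ vo`, `0 ≤ d_crit` and `d_CPA ≤ d_crit`, then
`t₁ = t_CPA - √(d_crit² - d_CPA²)/‖v - vo‖` and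
`t₂ = t_CPA + √(d_crit² - d_CPA²)/‖v - vo‖` both solve
`‖(p + t • v) - (po + t • vo)‖ = d_crit`, and every real solution equals `t₁` or `t₂`. -/
theorem critical_distance_solutions
    (p v po vo : EuclideanSpace ℝ (Fin 2)) (hv : v ≠ vo)
    (d : ℝ → ℝ) (hd : ∀ t, d t = ‖(p + t • v) - (po + t • vo)‖)
    (tCPA : ℝ) (htCPA : tCPA = ⟪po - p, v - vo⟫ / ‖v - vo‖ ^ 2)
    (dCPA : ℝ) (hdCPA : dCPA = d tCPA)
    (dcrit : ℝ) (hdcrit_nonneg : 0 ≤ dcrit) (hle : dCPA ≤ dcrit)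
    (t₁ t₂ : ℝ)
    (ht₁ : t₁ = tCPA - Real.sqrt (dcrit ^ 2 - dCPA ^ 2) / ‖v - vo‖)
    (ht₂ : t₂ = tCPA + Real.sqrt (dcrit ^ 2 - dCPA ^ 2) / ‖v - vo‖) :
    ‖(p + t₁ • v) - (po + t₁ • vo)‖ = dcrit ∧
    ‖(p + t₂ • v) - (po + t₂ • vo)‖ = dcrit ∧
    ∀ t : ℝ, ‖(p + t • v) - (po + t • vo)‖ = dcrit → t = t₁ ∨ t = t₂ := by
  have hw : v - vo ≠ 0 := sub_ne_zero.mpr hv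
  have hwpos : (0:ℝ) < ‖v - vo‖ := norm_pos_iff.mpr hw
  have hwn : ‖v - vo‖ ≠ 0 := ne_of_gt hwpos
  set n : ℝ := ‖v - vo‖ with hn
  -- expansion of the squared norm
  have hsq : ∀ s : ℝ, ‖(p + s • v) - (po + s • vo)‖ ^ 2
      = ‖p - po‖ ^ 2 + 2 * s * ⟪p - po, v - vo⟫ + s ^ 2 * n ^ 2 := by
    intro s
    have hrw : (p + s • v) - (po + s • vo) = (p - po) + s • (v - vo) := by
      rw [smul_sub]; abel
    rw [hrw, norm_add_sq_real, real_inner_smul_right, norm_smul,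
      Real.norm_eq_abs, mul_pow, sq_abs]
    ring
  have hinner : ⟪po - p, v - vo⟫ = -⟪p - po, v - vo⟫ := by
    rw [← inner_neg_left, neg_sub]
  have htc : tCPA = -⟪p - po, v - vo⟫ / n ^ 2 := by rw [htCPA, hinner]
  have key : ∀ t : ℝ, ‖(p + t • v) - (po + t • vo)‖ ^ 2
      = n ^ 2 * (t - tCPA) ^ 2 + dCPA ^ 2 := by
    intro t
    set a : ℝ := ⟪p - po, v - vo⟫ with ha
    have h1 := hsq t
    have h2 := hsq tCPA
    rw [hdCPA, hd]
    rw [h1, h2, htc]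
    field_simp
    ring

  have hdCPA_nonneg : 0 ≤ dCPA := by rw [hdCPA, hd]; exact norm_nonneg _
  have hnonneg : 0 ≤ dcrit ^ 2 - dCPA ^ 2 := by nlinarith
  have hs2 : Real.sqrt (dcrit ^ 2 - dCPA ^ 2) ^ 2 = dcrit ^ 2 - dCPA ^ 2 :=
    Real.sq_sqrt hnonneg
  have sol : ∀ t : ℝ, n ^ 2 * (t - tCPA) ^ 2 + dCPA ^ 2 = dcrit ^ 2 →
      ‖(p + t • v) - (po + t • vo)‖ = dcrit := by
    intro t ht
    have := key t
    rw [ht] at this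
    have h := congrArg Real.sqrt this
    rwa [Real.sqrt_sq (norm_nonneg _), Real.sqrt_sq hdcrit_nonneg] at h
  have h1 : ‖(p + t₁ • v) - (po + t₁ • vo)‖ = dcrit := by
    apply sol
    rw [ht₁]
    field_simp
    nlinarith [hs2]
  have h2 : ‖(p + t₂ • v) - (po + t₂ • vo)‖ = dcrit := by
    apply sol
    rw [ht₂]
    field_simp
    nlinarith [hs2]
  refine ⟨h1, h2, ?_⟩
  intro t ht
  have hk := key t
  rw [ht] at hk
  set c : ℝ := Real.sqrt (dcrit ^ 2 - dCPA ^ 2) / n with hc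
  have hfac : (t - tCPA + c) * (t - tCPA - c) = 0 := by
    have hc2' : n ^ 2 * c ^ 2 = dcrit ^ 2 - dCPA ^ 2 := by
      rw [hc, div_pow, hs2]
      field_simp
    have h5 : n ^ 2 * ((t - tCPA + c) * (t - tCPA - c)) = 0 := by
      linear_combination -hk - hc2'
    exact (mul_eq_zero.mp h5).resolve_left (pow_ne_zero 2 hwn)
  rcases mul_eq_zero.mp hfac with h | h
  · left; rw [ht₁]; linarith
  · right; rw [ht₂]; linarith
end

section
/- Let V_b ⊆ ℝ² be a finite set of body vertices, let c_rot(q) = R(ψ) q + (x, y) be a rigid motion, and let S_env = {p ∈ ℝ² : a_l · p ≤ b_l, l = 1, …, K} be a convex polytope with unit-norm normals ‖a_l‖ = 1. Suppose 0 ≤ ε ≤ d_safe and that the margined constraints a_l · c_rot(p_l) ≤ b_l − (d_safe − ε) hold for every vertex p_l ∈ V_b and every l. Then every point of ℝ² whose distance to the transformed body (the image under c_rot of the convex hull of V_b) is at most d_safe − ε lies in S_env. -/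
open RealInnerProductSpace

/-- Let `Vb` be a finite set of body vertices, `crot` the rigid
motion at pose `(x, y, ψ)`, and `Senv` a convex polytope with unit-norm normals.
If `0 ≤ ε ≤ d_safe` and the margined constraints
`⟪a l, crot pl⟫ ≤ b l - (d_safe - ε)` hold for every vertex `pl ∈ Vb` and every `l`,
then every point of the plane whose distance to the transformed body
(the image under `crot` of the convex hull of `Vb`) is at most `d_safe - ε`
lies in `Senv`. -/
theorem margined_constraints_safety_margin
    (Vb : Finset (EuclideanSpace ℝ (Fin 2))) (ψ x y : ℝ)
    (crot : EuclideanSpace ℝ (Fin 2) → EuclideanSpace ℝ (Fin 2))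
    (hcrot : ∀ q, crot q = (WithLp.equiv 2 (Fin 2 → ℝ)).symm
      ![Real.cos ψ * q 0 - Real.sin ψ * q 1 + x,
        Real.sin ψ * q 0 + Real.cos ψ * q 1 + y])
    (K : ℕ) (a : Fin K → EuclideanSpace ℝ (Fin 2)) (b : Fin K → ℝ)
    (ha : ∀ l : Fin K, ‖a l‖ = 1)
    (Senv : Set (EuclideanSpace ℝ (Fin 2)))
    (hSenv : Senv = {p : EuclideanSpace ℝ (Fin 2) | ∀ l : Fin K, ⟪a l, p⟫ ≤ b l})
    (dsafe ε : ℝ) (hε : 0 ≤ ε) (hεd : ε ≤ dsafe)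
    (hV : ∀ pl ∈ Vb, ∀ l : Fin K, ⟪a l, crot pl⟫ ≤ b l - (dsafe - ε)) :
    ∀ z : EuclideanSpace ℝ (Fin 2),
      (∃ w ∈ crot '' (convexHull ℝ (Vb : Set (EuclideanSpace ℝ (Fin 2)))),
        dist z w ≤ dsafe - ε) → z ∈ Senv := by
  intro z ⟨w, ⟨p, hp, hpw⟩, hdist⟩
  subst hSenv
  intro l
  -- the margined constraint holds on the whole convex hull
  have hhull : ∀ p ∈ convexHull ℝ (Vb : Set (EuclideanSpace ℝ (Fin 2))),
      ⟪a l, crot p⟫ ≤ b l - (dsafe - ε) := by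
    intro p hp
    have : p ∈ {q : EuclideanSpace ℝ (Fin 2) | ⟪a l, crot q⟫ ≤ b l - (dsafe - ε)} := by
      refine convexHull_min (fun v hv => hV v hv l) ?_ hp
      intro u hu v hv θ σ hθ hσ hθσ
      have hkey : crot (θ • u + σ • v) = θ • crot u + σ • crot v := by
        simp only [hcrot]
        ext i
        fin_cases i <;>
          simp [PiLp.add_apply, PiLp.smul_apply, WithLp.equiv_symm_apply,
            smul_eq_mul, Matrix.cons_val_zero, Matrix.cons_val_one, Matrix.head_cons]
        · linear_combination (-x) * hθσ
        · linear_combination (-y) * hθσ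
      have hu' : ⟪a l, crot u⟫ ≤ b l - (dsafe - ε) := hu
      have hv' : ⟪a l, crot v⟫ ≤ b l - (dsafe - ε) := hv
      show ⟪a l, crot (θ • u + σ • v)⟫ ≤ b l - (dsafe - ε)
      rw [hkey, inner_add_right, inner_smul_right, inner_smul_right]
      have hc : θ * (b l - (dsafe - ε)) + σ * (b l - (dsafe - ε)) = b l - (dsafe - ε) := by
        linear_combination (b l - (dsafe - ε)) * hθσ
      nlinarith [mul_le_mul_of_nonneg_left hu' hθ, mul_le_mul_of_nonneg_left hv' hσ]
    exact this
  have hw : ⟪a l, w⟫ ≤ b l - (dsafe - ε) := hpw ▸ hhull p hp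
  have hcs : ⟪a l, z - w⟫ ≤ ‖z - w‖ := by
    calc ⟪a l, z - w⟫ ≤ ‖a l‖ * ‖z - w‖ := real_inner_le_norm _ _
    _ = ‖z - w‖ := by rw [ha l, one_mul]
  have hdz : ‖z - w‖ ≤ dsafe - ε := by rwa [← dist_eq_norm]
  have hz : w + (z - w) = z := by abel
  have : ⟪a l, z⟫ = ⟪a l, w⟫ + ⟪a l, z - w⟫ := by rw [← inner_add_right, hz]
  linarith
end
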